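/- Let T be a continuous linear automorphism of a Banach space B with the shadowing property, and let E ⊆ B be a closed T-invariant subspace (T(E) = E). Then the induced automorphism on the quotient Banach space B/E also has the shadowing property. -/

import Mathlib

/-- Shadowing property for a continuous linear automorphism. -/
def Shadowing {X : Type*} [SeminormedAddCommGroup X] [Module ℝ X] (T : X ≃L[ℝ] X) : Prop :=
  ∀ ε > (0 : ℝ), ∃ δ > (0 : ℝ), ∀ x : ℤ → X,
    (∀ n : ℤ, ‖x (n + 1) - T (x n)‖ < δ) →
    ∃ y : X, ∀ n : ℤ, ‖x n - (T ^ n) y‖ < ε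

private noncomputable def fwdLift {B : Type*} [NormedAddCommGroup B] [NormedSpace ℝ B]
    (T : B ≃L[ℝ] B) (z0 : B) (d : ℤ → B) : ℕ → B
  | 0 => z0
  | k + 1 => T (fwdLift T z0 d k) + d k

private noncomputable def bwdLift {B : Type*} [NormedAddCommGroup B] [NormedSpace ℝ B]
    (T : B ≃L[ℝ] B) (z0 : B) (d : ℤ → B) : ℕ → B
  | 0 => z0
  | k + 1 => T.symm (bwdLift T z0 d k - d (-(k + 1 : ℤ)))

/-- if `T` has the shadowing property and `E` is a closed invariant subspace,
then the induced automorphism on the quotient `B ⧸ E` has the shadowing property. -/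
theorem stmt6 {B : Type*} [NormedAddCommGroup B] [NormedSpace ℝ B] [CompleteSpace B]
    (T : B ≃L[ℝ] B) (hT : Shadowing T)
    (E : Submodule ℝ B) (hEc : IsClosed (E : Set B))
    (hinv : ⇑T '' (E : Set B) = (E : Set B))
    (That : (B ⧸ E) ≃L[ℝ] (B ⧸ E))
    (hcomm : ∀ x : B, That (Submodule.Quotient.mk x) = Submodule.Quotient.mk (T x)) :
    Shadowing That := by
  -- inverse version of hcomm
  have hcomm' : ∀ x : B, That.symm (Submodule.Quotient.mk x)
      = Submodule.Quotient.mk (T.symm x) := by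
    intro x
    apply That.injective
    rw [That.apply_symm_apply, hcomm, T.apply_symm_apply]
  -- powers commute with mk
  have hpow : ∀ n : ℤ, ∀ b : B,
      (That ^ n) ((Submodule.Quotient.mk b : B ⧸ E)) = Submodule.Quotient.mk ((T ^ n) b) := by
    intro n
    induction n using Int.induction_on with
    | zero => intro b; rw [zpow_zero, zpow_zero]; rfl
    | succ k ih =>
      intro b
      have h1 : ((k : ℤ) + 1) = (k : ℤ) + 1 := rfl
      rw [zpow_add_one, zpow_add_one]
      show (That ^ (k : ℤ)) (That _) = Submodule.Quotient.mk ((T ^ (k : ℤ)) (T b))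
      rw [hcomm, ih]
    | pred k ih =>
      intro b
      rw [zpow_sub_one, zpow_sub_one]
      show (That ^ (-(k : ℤ))) (That⁻¹ _) = Submodule.Quotient.mk ((T ^ (-(k : ℤ))) (T⁻¹ b))
      have : (That⁻¹ : (B ⧸ E) ≃L[ℝ] (B ⧸ E)) (Submodule.Quotient.mk b)
          = Submodule.Quotient.mk ((T⁻¹ : B ≃L[ℝ] B) b) := hcomm' b
      rw [this, ih]
  intro ε hε
  obtain ⟨δ, hδ, hsh⟩ := hT ε hε
  refine ⟨δ, hδ, ?_⟩
  intro x hx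
  have hd : ∀ n : ℤ, ∃ dn : B,
      Submodule.Quotient.mk dn = x (n + 1) - That (x n) ∧ ‖dn‖ < δ := by
    intro n
    have h1 : (0 : ℝ) < δ - ‖x (n + 1) - That (x n)‖ := by linarith [hx n]
    obtain ⟨m, hm1, hm2⟩ := Submodule.Quotient.norm_mk_lt (x (n + 1) - That (x n)) h1
    exact ⟨m, hm1, by linarith⟩
  choose d hd1 hd2 using hd
  obtain ⟨z0, hz0⟩ := Submodule.Quotient.mk_surjective E (x 0)
  set y : ℤ → B := fun n =>
    if 0 ≤ n then fwdLift T z0 d n.toNat else bwdLift T z0 d (-n).toNat with hy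
  -- key recurrence
  have key : ∀ n : ℤ, y (n + 1) = T (y n) + d n := by
    intro n
    rcases le_or_gt 0 n with hn | hn
    · have h1 : y n = fwdLift T z0 d n.toNat := by
        simp only [hy]; rw [if_pos hn]
      have h2 : y (n + 1) = fwdLift T z0 d (n.toNat + 1) := by
        simp only [hy]
        rw [if_pos (by omega : (0:ℤ) ≤ n + 1)]
        congr 1
        omega
      have h3 : d ((n.toNat : ℤ)) = d n := by congr 1; omega
      rw [h2, h1, fwdLift, h3]
    · set m : ℕ := (-(n + 1)).toNat with hm
      have h1 : y n = bwdLift T z0 d (m + 1) := by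
        simp only [hy]; rw [if_neg (not_le.mpr hn)]
        congr 1
        omega
      have h2 : y (n + 1) = bwdLift T z0 d m := by
        rcases eq_or_lt_of_le (by omega : n + 1 ≤ 0) with h | h
        · have hm0 : m = 0 := by omega
          simp only [hy]
          rw [if_pos (by omega : (0:ℤ) ≤ n + 1)]
          have h4 : (n + 1).toNat = 0 := by omega
          rw [h4, hm0]
          rfl
        · simp only [hy]; rw [if_neg (not_le.mpr h)]
      rw [h2, h1, bwdLift]
      have hdn : -((m : ℤ) + 1) = n := by omega
      rw [hdn, T.apply_symm_apply]
      abel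
  -- y lifts x
  have hlift : ∀ n : ℤ, (Submodule.Quotient.mk (y n) : B ⧸ E) = x n := by
    have base : (Submodule.Quotient.mk (y 0) : B ⧸ E) = x 0 := by
      simp [hy, fwdLift, hz0]
    have step : ∀ n : ℤ, (Submodule.Quotient.mk (y n) : B ⧸ E) = x n →
        (Submodule.Quotient.mk (y (n + 1)) : B ⧸ E) = x (n + 1) := by
      intro n h
      rw [key n]
      have : (Submodule.Quotient.mk (T (y n) + d n) : B ⧸ E)
          = Submodule.Quotient.mk (T (y n)) + Submodule.Quotient.mk (d n) := by
        simp [Submodule.Quotient.mk_add]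
      rw [this, ← hcomm, h, hd1 n]
      abel
    have step' : ∀ n : ℤ, (Submodule.Quotient.mk (y (n + 1)) : B ⧸ E) = x (n + 1) →
        (Submodule.Quotient.mk (y n) : B ⧸ E) = x n := by
      intro n h
      have h2 := key n
      have h3 : (Submodule.Quotient.mk (y (n + 1)) : B ⧸ E)
          = That (Submodule.Quotient.mk (y n)) + Submodule.Quotient.mk (d n) := by
        rw [h2, Submodule.Quotient.mk_add, hcomm]
      rw [h, hd1 n] at h3
      have h4 : That (Submodule.Quotient.mk (y n)) = That (x n) := by
        have h5 : That (Submodule.Quotient.mk (y n)) + (x (n+1) - That (x n)) = x (n+1) :=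
          h3.symm
        have h6 := eq_sub_of_add_eq h5
        rwa [sub_sub_cancel] at h6
      exact That.injective h4
    intro n
    induction n using Int.induction_on with
    | zero => exact base
    | succ k ih => exact step k ih
    | pred k ih =>
      have := step' (-(k:ℤ) - 1)
      simp only [sub_add_cancel] at this
      exact this ih
  -- apply shadowing upstairs
  have herr : ∀ n : ℤ, ‖y (n + 1) - T (y n)‖ < δ := by
    intro n
    rw [key n]
    simpa using hd2 n
  obtain ⟨z, hz⟩ := hsh y herr
  refine ⟨Submodule.Quotient.mk z, ?_⟩
  intro n
  calc ‖x n - (That ^ n) (Submodule.Quotient.mk z)‖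
      = ‖(Submodule.Quotient.mk (y n - (T ^ n) z) : B ⧸ E)‖ := by
        rw [Submodule.Quotient.mk_sub, hlift n, hpow n z]
    _ ≤ ‖y n - (T ^ n) z‖ := Submodule.Quotient.norm_mk_le _ _
    _ < ε := hz n
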